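/- Let v ≥ 0, ρ ≥ 0, a ≥ 0, and b > 0 be real numbers, and define the worst-case rear-car trajectory x: ℝ≥0 → ℝ by x(t) = v·t + (1/2)·a·t² for 0 ≤ t ≤ ρ, x(t) = x(ρ) + (v + ρ·a)·(t − ρ) − (1/2)·b·(t − ρ)² for ρ ≤ t ≤ ρ + (v + ρ·a)/b, and x(t) constant equal to its value at t = ρ + (v + ρ·a)/b thereafter. Then x is monotone nondecreasing and sup over t ≥ 0 of x(t) equals v·ρ + (1/2)·ρ²·a + (v + ρ·a)²/(2·b). -/

import Mathlib

open NNReal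

/-- The worst-case rear-car trajectory: a car with initial velocity `v` accelerates
at rate `a` during the response phase `[0, ρ]`, reaching velocity `v + ρ·a`, and
then brakes at constant rate `b` until it stops, remaining stationary afterwards. -/
noncomputable def rearTraj (v ρ a b : ℝ) (t : ℝ≥0) : ℝ :=
  if (t : ℝ) ≤ ρ then v * (t : ℝ) + (1/2) * a * (t : ℝ)^2
  else if (t : ℝ) ≤ ρ + (v + ρ * a) / b then
    (v * ρ + (1/2) * a * ρ^2) + (v + ρ * a) * ((t : ℝ) - ρ) - (1/2) * b * ((t : ℝ) - ρ)^2
  else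
    (v * ρ + (1/2) * a * ρ^2) + (v + ρ * a) * ((v + ρ * a) / b)
      - (1/2) * b * ((v + ρ * a) / b)^2

set_option maxHeartbeats 1600000 in
theorem rearTraj_monotone_sup (v ρ a b : ℝ)
    (hv : 0 ≤ v) (hρ : 0 ≤ ρ) (ha : 0 ≤ a) (hb : 0 < b) :
    Monotone (rearTraj v ρ a b) ∧
    (⨆ t : ℝ≥0, rearTraj v ρ a b t) = v * ρ + (1/2) * ρ^2 * a + (v + ρ * a)^2 / (2 * b) := by
  have hV : 0 ≤ v + ρ * a := by positivity
  set q : ℝ := (v + ρ * a) / b with hqdef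
  have hq : b * q = v + ρ * a := by rw [hqdef]; field_simp
  have hq0 : 0 ≤ q := by positivity
  have hVsq : (v + ρ * a)^2 / (2 * b) = b * q^2 / 2 := by
    rw [← hq]; field_simp
  -- every value is ≤ M
  have hle : ∀ t : ℝ≥0, rearTraj v ρ a b t
      ≤ v * ρ + (1/2) * ρ^2 * a + (v + ρ * a)^2 / (2 * b) := by
    intro t
    have ht : (0:ℝ) ≤ (t:ℝ) := t.coe_nonneg
    rw [hVsq]
    unfold rearTraj
    split_ifs with h1 h2
    · nlinarith [mul_nonneg hv (sub_nonneg.2 h1),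
        mul_nonneg ha (mul_nonneg ht (sub_nonneg.2 h1)),
        mul_nonneg ha (sq_nonneg (ρ - (t:ℝ))),
        mul_nonneg hb.le (sq_nonneg q)]
    · nlinarith [mul_nonneg hb.le (sq_nonneg (q - ((t:ℝ) - ρ)))]
    · nlinarith [hq]
  have hmono : Monotone (rearTraj v ρ a b) := by
    intro s t hst
    have hst' : (s:ℝ) ≤ (t:ℝ) := hst
    have hs0 : (0:ℝ) ≤ (s:ℝ) := s.coe_nonneg
    rcases le_or_gt (s:ℝ) ρ with hs | hs
    · rcases le_or_gt (t:ℝ) ρ with ht | ht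
      · simp only [rearTraj, if_pos hs, if_pos ht]
        nlinarith [mul_nonneg hv (sub_nonneg.2 hst'),
          mul_nonneg ha (mul_nonneg hs0 (sub_nonneg.2 hst')),
          mul_nonneg ha (sq_nonneg ((t:ℝ) - (s:ℝ)))]
      · have hf1 : v * (s:ℝ) + (1/2) * a * (s:ℝ)^2 ≤ v * ρ + (1/2) * a * ρ^2 := by
          nlinarith [mul_nonneg hv (sub_nonneg.2 hs),
            mul_nonneg ha (mul_nonneg hs0 (sub_nonneg.2 hs)),
            mul_nonneg ha (sq_nonneg (ρ - (s:ℝ)))]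
        rcases le_or_gt (t:ℝ) (ρ + q) with ht2 | ht2
        · simp only [rearTraj, ← hqdef, if_pos hs, if_neg (not_le.2 ht), if_pos ht2]
          have hbt : b * ((t:ℝ) - ρ) ≤ v + ρ * a := by nlinarith [hq]
          nlinarith [mul_nonneg (sub_nonneg.2 ht.le) (sub_nonneg.2 hbt),
            mul_nonneg hV (sub_nonneg.2 ht.le)]
        · simp only [rearTraj, ← hqdef, if_pos hs, if_neg (not_le.2 ht), if_neg (not_le.2 ht2)]
          nlinarith [mul_nonneg hb.le (sq_nonneg q), hq]
    · have hts : ρ < (t:ℝ) := lt_of_lt_of_le hs hst'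
      rcases le_or_gt (s:ℝ) (ρ + q) with hs2 | hs2
      · have hbs : b * ((s:ℝ) - ρ) ≤ v + ρ * a := by nlinarith [hq]
        rcases le_or_gt (t:ℝ) (ρ + q) with ht2 | ht2
        · simp only [rearTraj, ← hqdef, if_neg (not_le.2 hs), if_pos ht2,
            if_neg (not_le.2 hts), if_pos hs2]
          have hbt : b * ((t:ℝ) - ρ) ≤ v + ρ * a := by nlinarith [hq]
          nlinarith [mul_nonneg (sub_nonneg.2 hst') (sub_nonneg.2 hbs),
            mul_nonneg (sub_nonneg.2 hst') (sub_nonneg.2 hbt)]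
        · simp only [rearTraj, ← hqdef, if_neg (not_le.2 hs), if_pos hs2,
            if_neg (not_le.2 hts), if_neg (not_le.2 ht2)]
          nlinarith [mul_nonneg hb.le (sq_nonneg (q - ((s:ℝ) - ρ))), hq]
      · have ht2 : ρ + q < (t:ℝ) := lt_of_lt_of_le hs2 hst'
        simp only [rearTraj, ← hqdef, if_neg (not_le.2 hs), if_neg (not_le.2 hs2),
          if_neg (not_le.2 hts), if_neg (not_le.2 ht2)]
        exact le_rfl
  refine ⟨hmono, ?_⟩
  set T : ℝ≥0 := ⟨ρ + q, by positivity⟩ with hT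
  have hval : rearTraj v ρ a b T
      = v * ρ + (1/2) * ρ^2 * a + (v + ρ * a)^2 / (2 * b) := by
    have hTc : (T:ℝ) = ρ + q := rfl
    rw [hVsq]
    unfold rearTraj
    rw [hTc]
    split_ifs with h1 h2
    · have hqz : q = 0 := le_antisymm (by linarith) hq0
      rw [hqz]; nlinarith [hq, hqz]
    · nlinarith [hq]
    · exact absurd le_rfl h2
  apply le_antisymm
  · exact ciSup_le hle
  · calc v * ρ + (1/2) * ρ^2 * a + (v + ρ * a)^2 / (2 * b)
        = rearTraj v ρ a b T := hval.symm
      _ ≤ ⨆ t : ℝ≥0, rearTraj v ρ a b t :=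
        le_ciSup ⟨_, fun x ⟨t, htx⟩ => htx ▸ hle t⟩ T
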